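/- For every positive integer k, the sum F_1^2 + 2F_2^2 + 3F_3^2 + ... + kF_k^2 equals F_k(k·F_{k+1} - F_k) + τ, where τ = 0 if k is even and τ = 1 if k is odd. -/

import Mathlib

lemma fib_cassini (n : ℕ) :
    (Nat.fib (n+1) : ℤ)^2 - Nat.fib (n+1) * Nat.fib n - (Nat.fib n : ℤ)^2 = (-1)^n := by
  induction n with
  | zero => simp
  | succ n ih =>
    have h := Nat.fib_add_two (n := n)
    push_cast [h]
    push_cast [h] at ih
    ring_nf
    ring_nf at ih
    linarith

theorem sum_j_fib_sq (k : ℕ) (hk : 0 < k) :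
    (∑ j ∈ Finset.Icc 1 k, (j : ℤ) * (Nat.fib j : ℤ) ^ 2) =
      (Nat.fib k : ℤ) * ((k : ℤ) * Nat.fib (k + 1) - Nat.fib k) +
        (if Even k then 0 else 1) := by
  induction k with
  | zero => simp at hk
  | succ k ih =>
    rcases Nat.eq_zero_or_pos k with rfl | hk'
    · simp
    · rw [Finset.sum_Icc_succ_top (by omega), ih hk']
      have hc := fib_cassini k
      have h2 := Nat.fib_add_two (n := k)
      rcases Nat.even_or_odd k with he | ho
      · rw [if_pos he, if_neg (by simp [Nat.even_add_one, he])]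
        have : ((-1:ℤ))^k = 1 := he.neg_one_pow
        rw [this] at hc
        push_cast [h2]
        ring_nf
        ring_nf at hc
        nlinarith [hc]
      · rw [if_neg (by simp [Nat.not_even_iff_odd.mpr ho]), if_pos (by simp [Nat.even_add_one, Nat.not_even_iff_odd.mpr ho])]
        have : ((-1:ℤ))^k = -1 := ho.neg_one_pow
        rw [this] at hc
        push_cast [h2]
        ring_nf
        ring_nf at hc
        nlinarith [hc]
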